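/- Let n ≥ 1 and let τ: [0,1] → ℝ be continuous and strictly increasing. Set u*_{i,τ} = E[τ(T_i)] for 0 ≤ i ≤ n, and note τ(0) < u*_{0,τ} ≤ … ≤ u*_{n,τ} < τ(1). Then: (a) the invariant estimator d*_τ(Y;t) = Σ_{i=0}^n u*_{i,τ}·1{Y_i ≤ t < Y_{i+1}} of τ(F) satisfies, for every continuous cumulative distribution function F and every invariant estimator e(Y;t) = Σ_{i=0}^n v_i·1{Y_i ≤ t < Y_{i+1}} with constants v_i ∈ ℝ, E_F[∫_ℝ (e(Y;t) − τ(F(t)))² dF(t)] ≥ E_F[∫_ℝ (d*_τ(Y;t) − τ(F(t)))² dF(t)] = (1/(n+1))·Σ_{i=0}^n Var(τ(T_i)); (b) equivalently, the invariant estimator of F with weights u_i* = τ^{-1}(E[τ(T_i)]) minimizes E_F[∫_ℝ (τ(d(Y;t)) − τ(F(t)))² dF(t)] over all invariant estimators d of F with weights in [0,1]. -/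

import Mathlib

open MeasureTheory Set
open scoped ENNReal NNReal

noncomputable section

/-- Number of sample points `x j ≤ t`, as an element of `Fin (n+1)`.
Note `countLE x t = i` iff `Y_i ≤ t < Y_{i+1}` where `Y_1 ≤ … ≤ Y_n` are the
order statistics of `x` and `Y_0 = -∞`, `Y_{n+1} = +∞`. -/
def countLE {n : ℕ} (x : Fin n → ℝ) (t : ℝ) : Fin (n + 1) :=
  ⟨(Finset.univ.filter (fun j => x j ≤ t)).card,
    Nat.lt_succ_of_le ((Finset.card_filter_le _ _).trans (by simp))⟩

/-- The invariant estimator `d(Y;t) = Σ_{i=0}^n u_i · 1{Y_i ≤ t < Y_{i+1}}`. -/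
def invEst {n : ℕ} (u : Fin (n + 1) → ℝ) : (Fin n → ℝ) → ℝ → ℝ :=
  fun x t => u (countLE x t)

/-- The cumulative distribution function of `μ`. -/
def cdfOf (μ : Measure ℝ) (t : ℝ) : ℝ := (μ (Set.Iic t)).toReal

/-- Distribution of an i.i.d. sample of size `n` from `μ`. -/
def sampleMeasure (n : ℕ) (μ : Measure ℝ) : Measure (Fin n → ℝ) :=
  Measure.pi fun _ => μ

/-- `(n+1)·C(n,i)·t^i·(1−t)^{n−i}`, the `Beta(i+1, n−i+1)` density on `(0,1)`. -/
def betaDen (n i : ℕ) (t : ℝ) : ℝ :=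
  ((n : ℝ) + 1) * (n.choose i) * t ^ i * (1 - t) ^ (n - i)


/-- `E[τ(T_i)] = ∫₀¹ τ(t)·f_{T_i}(t) dt`. -/
def betaMean (n : ℕ) (τ : ℝ → ℝ) (i : Fin (n + 1)) : ℝ :=
  ∫ t in Set.Ioo (0 : ℝ) 1, τ t * betaDen n i t

/-- `Var(τ(T_i)) = E[τ(T_i)²] − (E[τ(T_i)])²`. -/
def betaVar (n : ℕ) (τ : ℝ → ℝ) (i : Fin (n + 1)) : ℝ :=
  (∫ t in Set.Ioo (0 : ℝ) 1, (τ t) ^ 2 * betaDen n i t) - (betaMean n τ i) ^ 2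

/-- Risk (in `[0,∞]`) of an estimator `d` of `τ(F)` under integrated squared
error `∫ (d(t) − τ(F(t)))² dF(t)`. -/
def riskSq {n : ℕ} (μ : Measure ℝ) (τ : ℝ → ℝ)
    (d : (Fin n → ℝ) → ℝ → ℝ) : ℝ≥0∞ :=
  ∫⁻ x, (∫⁻ t, ENNReal.ofReal ((d x t - τ (cdfOf μ t)) ^ 2) ∂μ)
    ∂(sampleMeasure n μ)



section AuxBIE

lemma beta_nat_int : ∀ (k i : ℕ), ∫ x in (0:ℝ)..1, x ^ i * (1 - x) ^ k
    = (i.factorial * k.factorial : ℝ) / (i + k + 1).factorial := by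
  intro k
  induction k with
  | zero =>
    intro i
    simp [integral_pow, Nat.factorial_succ]
    field_simp
  | succ k ih =>
    intro i
    have hd : ∀ x : ℝ, HasDerivAt (fun x : ℝ => x ^ (i+1) * (1 - x) ^ (k+1))
        (((i:ℝ)+1) * (x ^ i * (1-x)^(k+1)) - ((k:ℝ)+1) * (x ^ (i+1) * (1-x)^k)) x := by
      intro x
      have h1 : HasDerivAt (fun x : ℝ => x ^ (i+1)) (((i:ℝ)+1) * x ^ i) x := by
        simpa using hasDerivAt_pow (i+1) x
      have h2 : HasDerivAt (fun x : ℝ => (1 - x) ^ (k+1))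
          (-(((k:ℝ)+1) * (1-x)^k)) x := by
        have : HasDerivAt (fun x : ℝ => 1 - x) (-1) x := by
          simpa using (hasDerivAt_id x).const_sub 1
        simpa [mul_comm] using (HasDerivAt.fun_pow this (k+1))
      have := h1.fun_mul h2
      refine this.congr_deriv ?_
      push_cast
      ring
    have hInt : ∫ x in (0:ℝ)..1, (((i:ℝ)+1) * (x ^ i * (1-x)^(k+1)) - ((k:ℝ)+1) * (x ^ (i+1) * (1-x)^k)) = 0 := by
      rw [intervalIntegral.integral_eq_sub_of_hasDerivAt (fun x _ => hd x)]
      · norm_num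
      · apply Continuous.intervalIntegrable
        continuity
    have hIi : IntervalIntegrable (fun x : ℝ => x ^ i * (1-x)^(k+1)) volume 0 1 := by
      apply Continuous.intervalIntegrable; continuity
    have hIi2 : IntervalIntegrable (fun x : ℝ => x ^ (i+1) * (1-x)^k) volume 0 1 := by
      apply Continuous.intervalIntegrable; continuity
    rw [intervalIntegral.integral_sub (hIi.const_mul _) (hIi2.const_mul _),
      intervalIntegral.integral_const_mul, intervalIntegral.integral_const_mul] at hInt
    have key : (((i:ℝ)+1)) * ∫ x in (0:ℝ)..1, x ^ i * (1-x)^(k+1)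
        = ((k:ℝ)+1) * ∫ x in (0:ℝ)..1, x ^ (i+1) * (1-x)^k := by linarith
    have := ih (i+1)
    rw [this] at key
    have h1 : ((i:ℝ)+1) ≠ 0 := by positivity
    have e1 : ∫ x in (0:ℝ)..1, x ^ i * (1-x)^(k+1)
        = ((k:ℝ)+1) * ((i+1).factorial * k.factorial / ((i+1) + k + 1).factorial) / ((i:ℝ)+1) := by
      field_simp at key ⊢
      linarith
    rw [e1]
    rw [show (i+1) + k + 1 = i + (k+1) + 1 by ring]
    rw [Nat.factorial_succ i, Nat.factorial_succ k]
    push_cast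
    have hfac : ((i + (k+1) + 1).factorial : ℝ) ≠ 0 := by positivity
    field_simp


lemma setIoo_eq_interval (f : ℝ → ℝ) :
    ∫ t in Set.Ioo (0:ℝ) 1, f t = ∫ t in (0:ℝ)..1, f t := by
  rw [intervalIntegral.integral_of_le (by norm_num : (0:ℝ) ≤ 1),
    integral_Ioc_eq_integral_Ioo]

lemma integral_betaDen (n i : ℕ) (hi : i ≤ n) :
    ∫ t in Set.Ioo (0:ℝ) 1, betaDen n i t = 1 := by
  rw [setIoo_eq_interval]
  unfold betaDen
  have : ∀ t : ℝ, ((n : ℝ) + 1) * (n.choose i) * t ^ i * (1 - t) ^ (n - i)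
      = (((n : ℝ) + 1) * (n.choose i)) * (t ^ i * (1 - t) ^ (n - i)) := by intro t; ring
  simp_rw [this]
  rw [intervalIntegral.integral_const_mul, beta_nat_int]
  have h1 : i + (n - i) + 1 = n + 1 := by omega
  rw [h1, Nat.factorial_succ]
  have h2 : (n.choose i : ℝ) * (i.factorial * (n-i).factorial) = n.factorial := by
    rw [← Nat.choose_mul_factorial_mul_factorial hi]; push_cast; ring
  have h3 : (n.factorial : ℝ) ≠ 0 := by positivity
  field_simp
  push_cast
  linear_combination ((n:ℝ)+1) * h2

lemma betaDen_nonneg {n i : ℕ} {t : ℝ} (ht : t ∈ Set.Icc (0:ℝ) 1) : 0 ≤ betaDen n i t := by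
  obtain ⟨h0, h1⟩ := ht
  unfold betaDen
  have : (0:ℝ) ≤ 1 - t := by linarith
  positivity

lemma betaDen_pos {n i : ℕ} (hi : i ≤ n) {t : ℝ} (ht : t ∈ Set.Ioo (0:ℝ) 1) : 0 < betaDen n i t := by
  obtain ⟨h0, h1⟩ := ht
  unfold betaDen
  have h2 : (0:ℝ) < 1 - t := by linarith
  have h3 : (0:ℝ) < (n.choose i : ℝ) := by exact_mod_cast Nat.choose_pos hi
  positivity


section CountLE
variable {n : ℕ}

lemma countLE_set_eq (t : ℝ) (i : Fin (n+1)) :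
    {x : Fin n → ℝ | countLE x t = i}
      = ⋃ S ∈ (Finset.univ.powersetCard (i:ℕ) : Finset (Finset (Fin n))),
          Set.univ.pi (fun j => if j ∈ S then Iic t else Ioi t) := by
  ext x
  simp only [mem_setOf_eq, Set.mem_iUnion, Finset.mem_powersetCard, Set.mem_pi,
    Set.mem_univ, forall_true_left, true_and, exists_prop]
  constructor
  · intro h
    refine ⟨Finset.univ.filter (fun j => x j ≤ t), ⟨Finset.filter_subset _ _ |>.trans (by simp), ?_⟩, ?_⟩
    · rw [← h]; rfl
    · intro j
      by_cases hj : x j ≤ t <;> simp [hj]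
      exact lt_of_not_ge hj
  · rintro ⟨S, ⟨-, hcard⟩, hx⟩
    have hS : Finset.univ.filter (fun j => x j ≤ t) = S := by
      ext j
      simp only [Finset.mem_filter, Finset.mem_univ, true_and]
      have := hx j
      by_cases hj : j ∈ S
      · simp [hj] at this ⊢; exact this
      · simp [hj] at this ⊢; exact this
    unfold countLE
    ext
    simp [hS, hcard]

lemma box_measurable (t : ℝ) (S : Finset (Fin n)) :
    MeasurableSet (Set.univ.pi (fun j : Fin n => if j ∈ S then Iic t else Ioi t)) := by
  apply MeasurableSet.univ_pi
  intro j
  by_cases hj : j ∈ S <;> simp [hj, measurableSet_Iic, measurableSet_Ioi]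

lemma countLE_set_measurable (t : ℝ) (i : Fin (n+1)) :
    MeasurableSet {x : Fin n → ℝ | countLE x t = i} := by
  rw [countLE_set_eq]
  exact (Finset.univ.powersetCard (i:ℕ)).measurableSet_biUnion (fun S _ => box_measurable t S)

lemma box_measure (μ : Measure ℝ) [IsProbabilityMeasure μ] (t : ℝ) (S : Finset (Fin n)) :
    sampleMeasure n μ (Set.univ.pi (fun j => if j ∈ S then Iic t else Ioi t))
      = μ (Iic t) ^ S.card * μ (Ioi t) ^ (n - S.card) := by
  rw [sampleMeasure, Measure.pi_pi]
  have : ∀ j : Fin n, μ (if j ∈ S then Iic t else Ioi t)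
      = if j ∈ S then μ (Iic t) else μ (Ioi t) := by intro j; by_cases hj : j ∈ S <;> simp [hj]
  simp_rw [this]
  rw [Finset.prod_ite, Finset.prod_const, Finset.prod_const]
  congr 1
  · congr 1
    rw [Finset.filter_mem_eq_inter, Finset.univ_inter]
  · congr 1
    have : Finset.univ.filter (fun j => ¬ j ∈ S) = Sᶜ := by ext j; simp
    rw [this, Finset.card_compl]
    simp

lemma measure_countLE (μ : Measure ℝ) [IsProbabilityMeasure μ] (t : ℝ) (i : Fin (n+1)) :
    sampleMeasure n μ {x | countLE x t = i}
      = (n.choose (i:ℕ)) * (μ (Iic t) ^ (i:ℕ) * μ (Ioi t) ^ (n - (i:ℕ))) := by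
  have hdisj : Set.PairwiseDisjoint
      ((Finset.univ.powersetCard (i:ℕ) : Finset (Finset (Fin n))) : Set (Finset (Fin n)))
      (fun S => Set.univ.pi (fun j => if j ∈ S then Iic t else Ioi t)) := by
    intro S hS S' hS' hne
    simp only [Function.onFun]
    apply Set.disjoint_left.mpr
    intro x hx hx'
    apply hne
    have h1 : ∀ j, x j ≤ t ↔ j ∈ S := by
      intro j; have := Set.mem_pi.mp hx j (Set.mem_univ j)
      by_cases hj : j ∈ S <;> simp [hj] at this ⊢ <;> tauto
    have h2 : ∀ j, x j ≤ t ↔ j ∈ S' := by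
      intro j; have := Set.mem_pi.mp hx' j (Set.mem_univ j)
      by_cases hj : j ∈ S' <;> simp [hj] at this ⊢ <;> tauto
    ext j
    rw [← h1, h2]
  rw [countLE_set_eq, measure_biUnion_finset hdisj (fun S _ => box_measurable t S)]
  have hval : ∀ S ∈ (Finset.univ.powersetCard (i:ℕ) : Finset (Finset (Fin n))),
      sampleMeasure n μ (Set.univ.pi (fun j => if j ∈ S then Iic t else Ioi t))
        = μ (Iic t) ^ (i:ℕ) * μ (Ioi t) ^ (n - (i:ℕ)) := by
    intro S hS
    rw [box_measure μ t S, (Finset.mem_powersetCard.mp hS).2]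
  rw [Finset.sum_congr rfl hval, Finset.sum_const, Finset.card_powersetCard,
    Finset.card_univ, Fintype.card_fin, nsmul_eq_mul]

lemma lintegral_countLE (μ : Measure ℝ) [IsProbabilityMeasure μ] (t : ℝ)
    (g : Fin (n+1) → ℝ≥0∞) :
    ∫⁻ x, g (countLE x t) ∂(sampleMeasure n μ)
      = ∑ i : Fin (n+1),
          (n.choose (i:ℕ)) * (μ (Iic t) ^ (i:ℕ) * μ (Ioi t) ^ (n - (i:ℕ))) * g i := by
  have hpt : ∀ x : Fin n → ℝ, g (countLE x t)
      = ∑ i : Fin (n+1), Set.indicator {x | countLE x t = i} (fun _ => g i) x := by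
    intro x
    rw [Finset.sum_eq_single (countLE x t)]
    · simp [Set.indicator_of_mem, Set.mem_setOf_eq]
    · intro i _ hne
      apply Set.indicator_of_notMem
      simp only [mem_setOf_eq]
      exact fun h => hne (h ▸ rfl)
    · simp
  simp_rw [hpt]
  rw [lintegral_finset_sum]
  · apply Finset.sum_congr rfl
    intro i _
    rw [lintegral_indicator (countLE_set_measurable t i), setLIntegral_const,
      measure_countLE μ t i]
    ring
  · intro i _
    exact (measurable_const).indicator (countLE_set_measurable t i)

end CountLE

lemma cdfOf_eq_cdf (μ : Measure ℝ) [IsProbabilityMeasure μ] :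
    cdfOf μ = ProbabilityTheory.cdf μ := by
  funext t
  rw [ProbabilityTheory.cdf_eq_real]
  rfl

lemma cdfOf_nonneg (μ : Measure ℝ) (t : ℝ) : 0 ≤ cdfOf μ t := ENNReal.toReal_nonneg

lemma cdfOf_le_one (μ : Measure ℝ) [IsProbabilityMeasure μ] (t : ℝ) : cdfOf μ t ≤ 1 := by
  rw [cdfOf_eq_cdf]; exact ProbabilityTheory.cdf_le_one μ t

lemma cdfOf_mono (μ : Measure ℝ) [IsProbabilityMeasure μ] : Monotone (cdfOf μ) := by
  rw [cdfOf_eq_cdf]; exact ProbabilityTheory.monotone_cdf μ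

lemma ofReal_cdfOf (μ : Measure ℝ) [IsProbabilityMeasure μ] (t : ℝ) :
    ENNReal.ofReal (cdfOf μ t) = μ (Iic t) :=
  (ENNReal.ofReal_toReal (measure_ne_top μ _))

lemma map_cdfOf (μ : Measure ℝ) [IsProbabilityMeasure μ] (hc : Continuous (cdfOf μ)) :
    μ.map (cdfOf μ) = volume.restrict (Set.Ioc (0:ℝ) 1) := by
  set F := cdfOf μ with hF
  have hmap : IsProbabilityMeasure (μ.map F) := Measure.isProbabilityMeasure_map hc.measurable.aemeasurable
  have hres : IsFiniteMeasure (volume.restrict (Set.Ioc (0:ℝ) 1)) := by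
    constructor
    rw [Measure.restrict_apply_univ]
    simp
  apply Measure.ext_of_Iic
  intro s
  rw [Measure.map_apply hc.measurable measurableSet_Iic,
    Measure.restrict_apply measurableSet_Iic]
  have hpre : F ⁻¹' (Iic s) = {t | F t ≤ s} := rfl
  rcases lt_or_ge s 0 with hs | hs
  · have h1 : F ⁻¹' (Iic s) = ∅ := by
      ext t; simp only [mem_preimage, mem_Iic, mem_empty_iff_false, iff_false, not_le]
      exact lt_of_lt_of_le hs (cdfOf_nonneg μ t)
    have h2 : Iic s ∩ Ioc (0:ℝ) 1 = ∅ := by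
      ext t; simp only [mem_inter_iff, mem_Iic, mem_Ioc, mem_empty_iff_false, iff_false]
      rintro ⟨h, h0, -⟩; linarith
    rw [h1, h2]; simp
  rcases le_or_gt 1 s with hs1 | hs1
  · have h1 : F ⁻¹' (Iic s) = univ := by
      ext t; simp only [mem_preimage, mem_Iic, mem_univ, iff_true]
      exact (cdfOf_le_one μ t).trans hs1
    have h2 : Iic s ∩ Ioc (0:ℝ) 1 = Ioc 0 1 := by
      apply inter_eq_self_of_subset_right
      intro t ht; exact ht.2.trans hs1
    rw [h1, h2, measure_univ, Real.volume_Ioc]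
    norm_num
  -- main case : 0 ≤ s < 1
  · have h2 : Iic s ∩ Ioc (0:ℝ) 1 = Ioc 0 s := by
      ext t; simp only [mem_inter_iff, mem_Iic, mem_Ioc]
      constructor
      · rintro ⟨h, h0, h1'⟩; exact ⟨h0, h⟩
      · rintro ⟨h0, h1'⟩; exact ⟨h1', h0, by linarith⟩
    rw [h2, Real.volume_Ioc, sub_zero]
    set A := F ⁻¹' (Iic s) with hA
    rcases eq_empty_or_nonempty A with he | hne
    · have hs0 : s = 0 := by
        by_contra h
        have hspos : 0 < s := lt_of_le_of_ne hs (Ne.symm h)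
        have := (ProbabilityTheory.tendsto_cdf_atBot μ).eventually_lt_const hspos
        rw [← cdfOf_eq_cdf] at this
        obtain ⟨t, ht⟩ := this.exists
        exact absurd (he ▸ (show t ∈ A from le_of_lt ht)) (notMem_empty t)
      rw [he, hs0]
      simp
    · have hclosed : IsClosed A := IsClosed.preimage hc isClosed_Iic
      have hbdd : BddAbove A := by
        have := (ProbabilityTheory.tendsto_cdf_atTop μ).eventually_const_lt hs1
        rw [← cdfOf_eq_cdf] at this
        obtain ⟨t₀, ht₀⟩ := this.exists
        refine ⟨t₀, fun t ht => ?_⟩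
        by_contra hlt
        push_neg at hlt
        exact absurd (lt_of_lt_of_le ht₀ (cdfOf_mono μ hlt.le)) (not_lt_of_ge ht)
      set c := sSup A with hc'
      have hcA : c ∈ A := hclosed.csSup_mem hne hbdd
      have hAc : A = Iic c := by
        ext t
        constructor
        · intro ht; exact le_csSup hbdd ht
        · intro ht
          exact le_trans (cdfOf_mono μ ht) hcA
      have hFc : F c = s := by
        refine le_antisymm hcA ?_
        have htend : Filter.Tendsto F (nhdsWithin c (Ioi c)) (nhds (F c)) :=
          (hc.tendsto c).mono_left nhdsWithin_le_nhds
        refine ge_of_tendsto htend ?_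
        filter_upwards [self_mem_nhdsWithin] with t ht
        by_contra hlt
        push_neg at hlt
        have : t ∈ A := hlt.le
        rw [hAc] at this
        exact absurd ht (by simpa using this)
      rw [hA, hpre] at *
      calc μ {t | F t ≤ s} = μ (Iic c) := by rw [show {t | F t ≤ s} = Iic c from hAc]
        _ = ENNReal.ofReal (F c) := (ofReal_cdfOf μ c).symm
        _ = ENNReal.ofReal s := by rw [hFc]


variable {n : ℕ}

instance sampleMeasure_prob (μ : Measure ℝ) [IsProbabilityMeasure μ] :
    IsProbabilityMeasure (sampleMeasure n μ) := by
  unfold sampleMeasure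
  infer_instance

lemma measurable_countLE :
    Measurable (fun p : (Fin n → ℝ) × ℝ => countLE p.1 p.2) := by
  apply measurable_to_countable'
  intro i
  have : (fun p : (Fin n → ℝ) × ℝ => countLE p.1 p.2) ⁻¹' {i}
      = {p : (Fin n → ℝ) × ℝ |
          (Finset.univ.filter (fun j => p.1 j ≤ p.2)).card = (i:ℕ)} := by
    ext p
    simp only [mem_preimage, mem_singleton_iff, mem_setOf_eq, countLE, Fin.ext_iff]
  rw [this]
  have hcard : (fun p : (Fin n → ℝ) × ℝ => (Finset.univ.filter (fun j => p.1 j ≤ p.2)).card)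
      = fun p => ∑ j : Fin n, if p.1 j ≤ p.2 then 1 else 0 := by
    funext p
    rw [Finset.card_filter]
  have hmeas : Measurable (fun p : (Fin n → ℝ) × ℝ =>
      (Finset.univ.filter (fun j => p.1 j ≤ p.2)).card) := by
    rw [hcard]
    apply Finset.measurable_sum
    intro j _
    have hset : MeasurableSet {p : (Fin n → ℝ) × ℝ | p.1 j ≤ p.2} := by
      have h1 : Continuous (fun p : (Fin n → ℝ) × ℝ => p.1 j) :=
        (continuous_apply j).comp continuous_fst
      exact (isClosed_le h1 continuous_snd).measurableSet
    exact Measurable.ite hset measurable_const measurable_const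
  exact hmeas (measurableSet_singleton (i:ℕ))

theorem riskSq_invEst (μ : Measure ℝ) [IsProbabilityMeasure μ]
    (hc : Continuous (cdfOf μ)) (σ : ℝ → ℝ) (hσ : Continuous σ)
    (v : Fin (n+1) → ℝ) :
    riskSq μ σ (invEst v)
      = ENNReal.ofReal (∑ i : Fin (n+1),
          ∫ s in Set.Ioc (0:ℝ) 1,
            (n.choose (i:ℕ)) * s ^ (i:ℕ) * (1-s) ^ (n-(i:ℕ)) * (v i - σ s)^2) := by
  set F := cdfOf μ with hF
  -- Tonelli swap
  have hmeas_f : Measurable (Function.uncurry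
      (fun x t => ENNReal.ofReal ((v (countLE x t) - σ (F t)) ^ 2) :
        (Fin n → ℝ) → ℝ → ℝ≥0∞)) := by
    apply Measurable.ennreal_ofReal
    apply Measurable.pow_const
    apply Measurable.sub
    · exact (measurable_of_countable v).comp measurable_countLE
    · exact ((hσ.comp hc).measurable).comp measurable_snd
  have hswap : riskSq μ σ (invEst v)
      = ∫⁻ t, (∫⁻ x, ENNReal.ofReal ((v (countLE x t) - σ (F t)) ^ 2)
          ∂(sampleMeasure n μ)) ∂μ := by
    rw [riskSq]
    exact lintegral_lintegral_swap hmeas_f.aemeasurable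
  rw [hswap]
  -- binomial slice
  have hslice : ∀ t : ℝ, (∫⁻ x, ENNReal.ofReal ((v (countLE x t) - σ (F t)) ^ 2)
          ∂(sampleMeasure n μ))
      = ∑ i : Fin (n+1), ENNReal.ofReal
          ((n.choose (i:ℕ)) * (F t) ^ (i:ℕ) * (1 - F t) ^ (n-(i:ℕ)) * (v i - σ (F t))^2) := by
    intro t
    rw [lintegral_countLE μ t (fun i => ENNReal.ofReal ((v i - σ (F t)) ^ 2))]
    apply Finset.sum_congr rfl
    intro i _
    have h0 : (0:ℝ) ≤ F t := cdfOf_nonneg μ t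
    have h1 : F t ≤ 1 := cdfOf_le_one μ t
    have hIic : μ (Iic t) = ENNReal.ofReal (F t) := (ofReal_cdfOf μ t).symm
    have hIoi : μ (Ioi t) = ENNReal.ofReal (1 - F t) := by
      have hcompl : Ioi t = (Iic t)ᶜ := by simp
      rw [hcompl, measure_compl measurableSet_Iic (measure_ne_top μ _), measure_univ, hIic,
        ← ENNReal.ofReal_one, ← ENNReal.ofReal_sub _ h0]
    have h1s : (0:ℝ) ≤ 1 - F t := by linarith
    have key : ENNReal.ofReal ((n.choose (i:ℕ):ℝ) * (F t) ^ (i:ℕ) * (1 - F t) ^ (n-(i:ℕ)) * (v i - σ (F t))^2)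
        = ((n.choose (i:ℕ) : ℝ≥0∞)) * (ENNReal.ofReal (F t) ^ (i:ℕ) * ENNReal.ofReal (1 - F t) ^ (n-(i:ℕ))) * ENNReal.ofReal ((v i - σ (F t))^2) := by
      rw [ENNReal.ofReal_mul (by positivity), ENNReal.ofReal_mul (by positivity),
        ENNReal.ofReal_mul (by positivity), ENNReal.ofReal_natCast,
        ENNReal.ofReal_pow h0, ENNReal.ofReal_pow h1s]
      ring
    rw [hIic, hIoi, key]
  simp_rw [hslice]
  -- push through the pushforward
  set G : ℝ → ℝ≥0∞ := fun s => ∑ i : Fin (n+1), ENNReal.ofReal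
      ((n.choose (i:ℕ)) * s ^ (i:ℕ) * (1 - s) ^ (n-(i:ℕ)) * (v i - σ s)^2) with hG
  have hGmeas : Measurable G := by
    apply Finset.measurable_sum
    intro i _
    apply Measurable.ennreal_ofReal
    exact (((continuous_const.mul (continuous_pow _)).mul
      ((continuous_const.sub continuous_id).pow _)).mul
      ((continuous_const.sub hσ).pow 2)).measurable
  have hmap : ∫⁻ t, G (F t) ∂μ = ∫⁻ s, G s ∂(μ.map F) :=
    (lintegral_map hGmeas hc.measurable).symm
  rw [show (∫⁻ t, ∑ i : Fin (n+1), ENNReal.ofReal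
      ((n.choose (i:ℕ)) * (F t) ^ (i:ℕ) * (1 - F t) ^ (n-(i:ℕ)) * (v i - σ (F t))^2) ∂μ)
      = ∫⁻ t, G (F t) ∂μ from rfl, hmap, map_cdfOf μ hc]
  -- compute the lintegral over [0,1]
  rw [hG]
  rw [lintegral_finset_sum _ (fun i _ => by
    apply Measurable.ennreal_ofReal
    exact (((continuous_const.mul (continuous_pow _)).mul
      ((continuous_const.sub continuous_id).pow _)).mul
      ((continuous_const.sub hσ).pow 2)).measurable)]
  rw [ENNReal.ofReal_sum_of_nonneg (fun i _ => by
    apply setIntegral_nonneg measurableSet_Ioc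
    intro s hs
    have h0 : (0:ℝ) ≤ s := le_of_lt hs.1
    have h1 : s ≤ 1 := hs.2
    have : (0:ℝ) ≤ 1 - s := by linarith
    positivity)]
  apply Finset.sum_congr rfl
  intro i _
  rw [← MeasureTheory.ofReal_integral_eq_lintegral_ofReal]
  · exact Continuous.integrableOn_Ioc (((continuous_const.mul (continuous_pow _)).mul
      ((continuous_const.sub continuous_id).pow _)).mul
      ((continuous_const.sub hσ).pow 2))
  · filter_upwards [ae_restrict_mem measurableSet_Ioc] with s hs
    have h0 : (0:ℝ) ≤ s := le_of_lt hs.1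
    have h1 : s ≤ 1 := hs.2
    have : (0:ℝ) ≤ 1 - s := by linarith
    positivity


lemma betaDen_cont {i : ℕ} : Continuous (betaDen n i) := by
  unfold betaDen
  exact (continuous_const.mul (continuous_pow _)).mul
    ((continuous_const.sub continuous_id).pow _)

lemma expand_term (σ : ℝ → ℝ) (hσ : Continuous σ) (i : Fin (n+1)) (a : ℝ) :
    ∫ s in Set.Ioc (0:ℝ) 1, (n.choose (i:ℕ)) * s ^ (i:ℕ) * (1-s) ^ (n-(i:ℕ)) * (a - σ s)^2
      = (betaVar n σ i + (a - betaMean n σ i)^2) / ((n:ℝ)+1) := by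
  rw [MeasureTheory.integral_Ioc_eq_integral_Ioo]
  have hβ : IntegrableOn (betaDen n (i:ℕ)) (Set.Ioo (0:ℝ) 1) volume :=
    betaDen_cont.integrableOn_Ioc.mono_set Set.Ioo_subset_Ioc_self
  have hσβ : IntegrableOn (fun s => σ s * betaDen n (i:ℕ) s) (Set.Ioo (0:ℝ) 1) volume :=
    (hσ.mul betaDen_cont).integrableOn_Ioc.mono_set Set.Ioo_subset_Ioc_self
  have hσ2β : IntegrableOn (fun s => (σ s)^2 * betaDen n (i:ℕ) s) (Set.Ioo (0:ℝ) 1) volume :=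
    ((hσ.pow 2).mul betaDen_cont).integrableOn_Ioc.mono_set Set.Ioo_subset_Ioc_self
  have hpt : ∀ s : ℝ, ((n.choose (i:ℕ)):ℝ) * s ^ (i:ℕ) * (1-s) ^ (n-(i:ℕ)) * (a - σ s)^2
      = (1/((n:ℝ)+1)) * ((a^2) * betaDen n (i:ℕ) s
          + ((-2*a) * (σ s * betaDen n (i:ℕ) s) + (σ s)^2 * betaDen n (i:ℕ) s)) := by
    intro s
    unfold betaDen
    have hne : ((n:ℝ)+1) ≠ 0 := by positivity
    field_simp
    ring
  simp_rw [hpt]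
  rw [MeasureTheory.integral_const_mul]
  have hg : IntegrableOn (fun s => (-2*a) * (σ s * betaDen n (i:ℕ) s) + (σ s)^2 * betaDen n (i:ℕ) s) (Set.Ioo (0:ℝ) 1) volume := (hσβ.const_mul _).add hσ2β
  rw [integral_add (hβ.const_mul _) hg, integral_add (hσβ.const_mul _) hσ2β,
    MeasureTheory.integral_const_mul, MeasureTheory.integral_const_mul,
    integral_betaDen n (i:ℕ) (Fin.is_le i)]
  have hm : (∫ s in Set.Ioo (0:ℝ) 1, σ s * betaDen n (i:ℕ) s) = betaMean n σ i := rfl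
  have hv : (∫ s in Set.Ioo (0:ℝ) 1, (σ s)^2 * betaDen n (i:ℕ) s)
      = betaVar n σ i + (betaMean n σ i)^2 := by
    unfold betaVar; ring
  rw [hm, hv]
  field_simp
  ring


lemma betaMean_step (σ : ℝ → ℝ) (hσc : Continuous σ) (hσm : Monotone σ)
    (i : ℕ) (hi : i + 1 ≤ n) (h1 : i < n + 1) (h2 : i + 1 < n + 1) :
    betaMean n σ ⟨i, h1⟩ ≤ betaMean n σ ⟨i+1, h2⟩ := by
  set k := n - (i + 1) with hk
  have hki : k + 1 = n - i := by omega
  set c : ℝ := ((n:ℝ) + 1) * (n.choose (i+1)) * ((i:ℝ)+1) with hc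
  have hc0 : 0 ≤ c := by positivity
  set E : Set (ℝ × ℝ) := {p : ℝ × ℝ | 0 < p.1 ∧ p.1 < p.2 ∧ p.2 < 1} with hE
  have hEeq : E = ({p : ℝ×ℝ | 0 < p.1} ∩ {p | p.1 < p.2}) ∩ {p | p.2 < 1} := by
    ext p; simp [hE, and_assoc]
  have hEopen : IsOpen E := by
    rw [hEeq]
    exact ((isOpen_lt continuous_const continuous_fst).inter
      (isOpen_lt continuous_fst continuous_snd)).inter
      (isOpen_lt continuous_snd continuous_const)
  have hEmeas : MeasurableSet E := hEopen.measurableSet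
  have hEsub : E ⊆ Icc (0:ℝ) 1 ×ˢ Icc (0:ℝ) 1 := by
    rintro ⟨u,v⟩ ⟨hu0, huv, hv1⟩
    exact ⟨⟨le_of_lt hu0, by simp at huv hv1 ⊢; linarith⟩,
      ⟨by simp at hu0 huv ⊢; linarith, le_of_lt hv1⟩⟩
  set g : ℝ×ℝ → ℝ := fun p => c * p.1 ^ i * (1 - p.2)^k * σ p.2 with hg
  set h : ℝ×ℝ → ℝ := fun p => c * p.1 ^ i * (1 - p.2)^k * σ p.1 with hh
  have hgc : Continuous g := by
    apply Continuous.mul _ (hσc.comp continuous_snd)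
    exact (continuous_const.mul ((continuous_fst.pow i))).mul
      ((continuous_const.sub continuous_snd).pow k)
  have hhc : Continuous h := by
    apply Continuous.mul _ (hσc.comp continuous_fst)
    exact (continuous_const.mul ((continuous_fst.pow i))).mul
      ((continuous_const.sub continuous_snd).pow k)
  have hcpt : IsCompact (Icc (0:ℝ) 1 ×ˢ Icc (0:ℝ) 1) := isCompact_Icc.prod isCompact_Icc
  have hgint : Integrable (E.indicator g) := by
    rw [integrable_indicator_iff hEmeas]
    exact (hgc.continuousOn.integrableOn_compact hcpt).mono_set hEsub
  have hhint : Integrable (E.indicator h) := by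
    rw [integrable_indicator_iff hEmeas]
    exact (hhc.continuousOn.integrableOn_compact hcpt).mono_set hEsub
  -- nonnegativity
  have hfnonneg : ∀ p : ℝ×ℝ, 0 ≤ E.indicator (fun p => g p - h p) p := by
    intro p
    apply Set.indicator_nonneg
    rintro ⟨u,v⟩ ⟨hu0, huv, hv1⟩
    simp only [hg, hh] at *
    have hmono : σ u ≤ σ v := hσm (le_of_lt huv)
    have hu : (0:ℝ) ≤ u := le_of_lt hu0
    have hv : (0:ℝ) ≤ 1 - v := by linarith
    have key : c * u ^ i * (1-v)^k * σ v - c * u ^ i * (1-v)^k * σ u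
        = (c * u ^ i * (1-v)^k) * (σ v - σ u) := by ring
    rw [key]
    exact mul_nonneg (mul_nonneg (mul_nonneg hc0 (pow_nonneg hu i)) (pow_nonneg hv k))
      (sub_nonneg.mpr hmono)
  have hdiff_nonneg : (0:ℝ) ≤ ∫ p, E.indicator (fun p => g p - h p) p :=
    integral_nonneg hfnonneg
  have hsplit : (fun p => E.indicator (fun p => g p - h p) p)
      = fun p => E.indicator g p - E.indicator h p := by
    funext p
    by_cases hp : p ∈ E <;>
      simp [Set.indicator_of_mem, Set.indicator_of_notMem, hp]
  have hint_sub : ∫ p, E.indicator (fun p => g p - h p) p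
      = (∫ p, E.indicator g p) - ∫ p, E.indicator h p := by
    rw [hsplit]
    exact integral_sub hgint hhint
  -- value of ∫ indicator g
  have hvolprod : (volume : Measure (ℝ×ℝ)) = (volume : Measure ℝ).prod volume :=
    Measure.volume_eq_prod ℝ ℝ
  have hgval : (∫ p, E.indicator g p) = betaMean n σ ⟨i+1, h2⟩ := by
    rw [hvolprod] at hgint ⊢
    rw [MeasureTheory.integral_prod_symm _ hgint]
    have hsec : ∀ v : ℝ, (∫ u, E.indicator g (u, v))
        = (Ioo (0:ℝ) 1).indicator (fun v => σ v * betaDen n (i+1) v) v := by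
      intro v
      by_cases hv : v ∈ Ioo (0:ℝ) 1
      · have heq : (fun u => E.indicator g (u,v))
            = (Ioo 0 v).indicator (fun u => (c * (1-v)^k * σ v) * u ^ i) := by
          funext u
          by_cases hu : u ∈ Ioo 0 v
          · rw [Set.indicator_of_mem (show ((u,v) : ℝ×ℝ) ∈ E from ⟨hu.1, hu.2, hv.2⟩), Set.indicator_of_mem hu]
            simp only [hg]; ring
          · rw [Set.indicator_of_notMem, Set.indicator_of_notMem hu]
            rintro ⟨ha, hb, -⟩; exact hu ⟨ha, hb⟩
        rw [heq, MeasureTheory.integral_indicator measurableSet_Ioo,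
          MeasureTheory.integral_const_mul]
        have hpowint : ∫ u in Ioo (0:ℝ) v, u ^ i = v^(i+1) / ((i:ℝ)+1) := by
          rw [← MeasureTheory.integral_Ioc_eq_integral_Ioo,
            ← intervalIntegral.integral_of_le hv.1.le, integral_pow]
          push_cast; ring
        rw [hpowint, Set.indicator_of_mem hv]
        show c * (1-v)^k * σ v * (v^(i+1) / ((i:ℝ)+1))
            = σ v * (((n:ℝ)+1) * (n.choose (i+1)) * v ^ (i+1) * (1-v)^(n-(i+1)))
        rw [← hk, hc]
        have : ((i:ℝ)+1) ≠ 0 := by positivity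
        field_simp
      · have heq : (fun u => E.indicator g (u,v)) = fun _ => (0:ℝ) := by
          funext u
          apply Set.indicator_of_notMem
          rintro ⟨ha, hb, hc'⟩
          exact hv ⟨lt_trans ha hb, hc'⟩
        rw [heq, integral_zero, Set.indicator_of_notMem hv]
    simp_rw [hsec]
    rw [MeasureTheory.integral_indicator measurableSet_Ioo]
    rfl
  -- value of ∫ indicator h
  have hhval : (∫ p, E.indicator h p) = betaMean n σ ⟨i, h1⟩ := by
    rw [hvolprod] at hhint ⊢
    rw [MeasureTheory.integral_prod _ hhint]
    have hsec : ∀ u : ℝ, (∫ v, E.indicator h (u, v))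
        = (Ioo (0:ℝ) 1).indicator (fun u => σ u * betaDen n i u) u := by
      intro u
      by_cases hu : u ∈ Ioo (0:ℝ) 1
      · have heq : (fun v => E.indicator h (u,v))
            = (Ioo u 1).indicator (fun v => (c * u ^ i * σ u) * (1-v)^k) := by
          funext v
          by_cases hv : v ∈ Ioo u 1
          · rw [Set.indicator_of_mem (show ((u,v) : ℝ×ℝ) ∈ E from ⟨hu.1, hv.1, hv.2⟩), Set.indicator_of_mem hv]
            simp only [hh]; ring
          · rw [Set.indicator_of_notMem, Set.indicator_of_notMem hv]
            rintro ⟨-, hb, hc'⟩; exact hv ⟨hb, hc'⟩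
        rw [heq, MeasureTheory.integral_indicator measurableSet_Ioo,
          MeasureTheory.integral_const_mul]
        have hpowint : ∫ v in Ioo u 1, (1-v) ^ k = (1-u)^(k+1) / ((k:ℝ)+1) := by
          rw [← MeasureTheory.integral_Ioc_eq_integral_Ioo,
            ← intervalIntegral.integral_of_le hu.2.le]
          have := intervalIntegral.integral_comp_sub_left (a := u) (b := 1)
            (fun x => x ^ k) 1
          rw [this, integral_pow]
          push_cast; ring
        rw [hpowint, Set.indicator_of_mem hu]
        show c * u ^ i * σ u * ((1-u)^(k+1) / ((k:ℝ)+1))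
            = σ u * (((n:ℝ)+1) * (n.choose i) * u ^ i * (1-u)^(n-i))
        rw [← hki]
        have hchoose : ((n.choose (i+1)) : ℝ) * ((i:ℝ)+1) = (n.choose i) * ((k:ℝ)+1) := by
          have := Nat.choose_succ_right_eq n i
          have hcast : ((n.choose (i+1) * (i+1) : ℕ) : ℝ) = ((n.choose i * (n - i) : ℕ) : ℝ) := by
            exact_mod_cast congrArg (Nat.cast : ℕ → ℝ) this
          push_cast at hcast
          rw [hcast, ← hki]
          push_cast; ring
        have hkne : ((k:ℝ)+1) ≠ 0 := by positivity
        rw [hc]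
        field_simp
        linear_combination u ^ i * σ u * (1-u)^(k+1) * hchoose
      · have heq : (fun v => E.indicator h (u,v)) = fun _ => (0:ℝ) := by
          funext v
          apply Set.indicator_of_notMem
          rintro ⟨ha, hb, hc'⟩
          exact hu ⟨ha, lt_trans hb hc'⟩
        rw [heq, integral_zero, Set.indicator_of_notMem hu]
    simp_rw [hsec]
    rw [MeasureTheory.integral_indicator measurableSet_Ioo]
    rfl
  rw [hint_sub, hgval, hhval] at hdiff_nonneg
  linarith


lemma betaMean_gt_zero (σ : ℝ → ℝ) (hσc : Continuous σ)
    (hstrict : ∀ t ∈ Set.Ioo (0:ℝ) 1, σ 0 < σ t) :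
    σ 0 < betaMean n σ 0 := by
  have hβ : IntegrableOn (betaDen n ((0 : Fin (n+1)):ℕ)) (Set.Ioo (0:ℝ) 1) volume :=
    betaDen_cont.integrableOn_Ioc.mono_set Set.Ioo_subset_Ioc_self
  have hσβ : IntegrableOn (fun s => σ s * betaDen n ((0 : Fin (n+1)):ℕ) s)
      (Set.Ioo (0:ℝ) 1) volume :=
    (hσc.mul betaDen_cont).integrableOn_Ioc.mono_set Set.Ioo_subset_Ioc_self
  have key : betaMean n σ 0 - σ 0
      = ∫ t in Set.Ioo (0:ℝ) 1, (σ t - σ 0) * betaDen n ((0 : Fin (n+1)):ℕ) t := by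
    have : (fun t => (σ t - σ 0) * betaDen n ((0 : Fin (n+1)):ℕ) t)
        = fun t => σ t * betaDen n ((0 : Fin (n+1)):ℕ) t
            - σ 0 * betaDen n ((0 : Fin (n+1)):ℕ) t := by funext t; ring
    rw [this, integral_sub hσβ (hβ.const_mul _), MeasureTheory.integral_const_mul,
      integral_betaDen n _ (by simp)]
    simp [betaMean]
  have hpos : 0 < ∫ t in Set.Ioo (0:ℝ) 1, (σ t - σ 0) * betaDen n ((0 : Fin (n+1)):ℕ) t := by
    rw [← MeasureTheory.integral_Ioc_eq_integral_Ioo,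
      ← intervalIntegral.integral_of_le (by norm_num : (0:ℝ) ≤ 1)]
    apply intervalIntegral.intervalIntegral_pos_of_pos_on
    · apply Continuous.intervalIntegrable
      exact ((hσc.sub continuous_const).mul betaDen_cont)
    · intro t ht
      exact mul_pos (sub_pos.mpr (hstrict t ht)) (betaDen_pos (by simp) ht)
    · norm_num
  linarith

lemma betaMean_lt_one (σ : ℝ → ℝ) (hσc : Continuous σ)
    (hstrict : ∀ t ∈ Set.Ioo (0:ℝ) 1, σ t < σ 1) :
    betaMean n σ (Fin.last n) < σ 1 := by
  have hβ : IntegrableOn (betaDen n ((Fin.last n : Fin (n+1)):ℕ)) (Set.Ioo (0:ℝ) 1) volume :=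
    betaDen_cont.integrableOn_Ioc.mono_set Set.Ioo_subset_Ioc_self
  have hσβ : IntegrableOn (fun s => σ s * betaDen n ((Fin.last n : Fin (n+1)):ℕ) s)
      (Set.Ioo (0:ℝ) 1) volume :=
    (hσc.mul betaDen_cont).integrableOn_Ioc.mono_set Set.Ioo_subset_Ioc_self
  have key : σ 1 - betaMean n σ (Fin.last n)
      = ∫ t in Set.Ioo (0:ℝ) 1, (σ 1 - σ t) * betaDen n ((Fin.last n : Fin (n+1)):ℕ) t := by
    have : (fun t => (σ 1 - σ t) * betaDen n ((Fin.last n : Fin (n+1)):ℕ) t)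
        = fun t => σ 1 * betaDen n ((Fin.last n : Fin (n+1)):ℕ) t
            - σ t * betaDen n ((Fin.last n : Fin (n+1)):ℕ) t := by funext t; ring
    rw [this, integral_sub (hβ.const_mul _) hσβ, MeasureTheory.integral_const_mul,
      integral_betaDen n _ (by simp)]
    simp [betaMean]
  have hpos : 0 < ∫ t in Set.Ioo (0:ℝ) 1,
      (σ 1 - σ t) * betaDen n ((Fin.last n : Fin (n+1)):ℕ) t := by
    rw [← MeasureTheory.integral_Ioc_eq_integral_Ioo,
      ← intervalIntegral.integral_of_le (by norm_num : (0:ℝ) ≤ 1)]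
    apply intervalIntegral.intervalIntegral_pos_of_pos_on
    · apply Continuous.intervalIntegrable
      exact ((continuous_const.sub hσc).mul betaDen_cont)
    · intro t ht
      exact mul_pos (sub_pos.mpr (hstrict t ht)) (betaDen_pos (by simp) ht)
    · norm_num
  linarith


lemma betaMean_mono_aux (σ : ℝ → ℝ) (hσc : Continuous σ) (hσm : Monotone σ) :
    ∀ b (hb : b < n+1), ∀ a (ha : a < n+1), a ≤ b →
      betaMean n σ ⟨a, ha⟩ ≤ betaMean n σ ⟨b, hb⟩ := by
  intro b
  induction b with
  | zero =>
    intro hb a ha hab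
    have h0 : a = 0 := by omega
    subst h0
    exact le_rfl
  | succ b ih =>
    intro hb a ha hab
    rcases Nat.eq_or_lt_of_le hab with heq | hlt
    · subst heq; exact le_rfl
    · have hab' : a ≤ b := by omega
      have hb' : b < n + 1 := by omega
      exact le_trans (ih hb' a ha hab')
        (betaMean_step σ hσc hσm b (by omega) hb' hb)

end AuxBIE

/-- under integrated squared error loss, (a) the invariant
estimator of `τ(F)` with weights `u*_{i,τ} = E[τ(T_i)]` is best invariant with
constant risk `(1/(n+1))·Σ_i Var(τ(T_i))`, and (b) equivalently the invariant
estimator of `F` with weights `u_i* = τ⁻¹(E[τ(T_i)])` minimizes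
`E_F[∫ (τ(d(Y;t)) − τ(F(t)))² dF(t)]` among invariant estimators; moreover
`τ(0) < u*_{0,τ} ≤ … ≤ u*_{n,τ} < τ(1)`. -/
theorem best_invariant_squared_error
    {n : ℕ} (hn : 1 ≤ n)
    (τ : ℝ → ℝ) (hτc : ContinuousOn τ (Set.Icc 0 1))
    (hτm : StrictMonoOn τ (Set.Icc 0 1)) :
    (τ 0 < betaMean n τ 0 ∧ Monotone (betaMean n τ) ∧
      betaMean n τ (Fin.last n) < τ 1) ∧
    (∀ (μ : Measure ℝ), IsProbabilityMeasure μ → Continuous (cdfOf μ) →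
      (∀ v : Fin (n + 1) → ℝ,
        riskSq μ τ (invEst (betaMean n τ)) ≤ riskSq μ τ (invEst v)) ∧
      riskSq μ τ (invEst (betaMean n τ)) =
        ENNReal.ofReal ((1 / ((n : ℝ) + 1)) * ∑ i : Fin (n + 1), betaVar n τ i)) ∧
    (∀ ustar : Fin (n + 1) → ℝ,
      (∀ i, ustar i ∈ Set.Icc (0 : ℝ) 1 ∧ τ (ustar i) = betaMean n τ i) →
      ∀ (μ : Measure ℝ), IsProbabilityMeasure μ → Continuous (cdfOf μ) →
        ∀ u : Fin (n + 1) → ℝ, (∀ i, u i ∈ Set.Icc (0 : ℝ) 1) →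
          riskSq μ τ (fun x t => τ (invEst ustar x t)) ≤
            riskSq μ τ (fun x t => τ (invEst u x t))) := by
  -- clamped version of τ : continuous and monotone on all of ℝ
  set σ : ℝ → ℝ := fun s => τ (max 0 (min s 1)) with hσdef
  have hclamp_mem : ∀ s : ℝ, max 0 (min s 1) ∈ Set.Icc (0:ℝ) 1 := by
    intro s
    exact ⟨le_max_left _ _, max_le (by norm_num) (min_le_right _ _)⟩
  have hclamp_eq : ∀ s ∈ Set.Icc (0:ℝ) 1, max 0 (min s 1) = s := by
    rintro s ⟨h0, h1⟩
    rw [min_eq_left h1, max_eq_right h0]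
  have hστ : ∀ s ∈ Set.Icc (0:ℝ) 1, σ s = τ s := by
    intro s hs
    rw [hσdef]
    simp only
    rw [hclamp_eq s hs]
  have hσc : Continuous σ := by
    apply hτc.comp_continuous
    · exact continuous_const.max (continuous_id.min continuous_const)
    · exact hclamp_mem
  have hclamp_mono : Monotone (fun s : ℝ => max 0 (min s 1)) := by
    intro a b hab
    exact max_le_max le_rfl (min_le_min hab le_rfl)
  have hσm : Monotone σ := fun a b hab =>
    hτm.monotoneOn (hclamp_mem a) (hclamp_mem b) (hclamp_mono hab)
  -- transfer of betaMean and betaVar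
  have hmean : betaMean n τ = betaMean n σ := by
    funext i
    unfold betaMean
    apply MeasureTheory.setIntegral_congr_fun measurableSet_Ioo
    intro t ht
    dsimp only
    rw [hστ t (Set.Ioo_subset_Icc_self ht)]
  have hvar : betaVar n τ = betaVar n σ := by
    funext i
    unfold betaVar
    rw [hmean]
    congr 1
    apply MeasureTheory.setIntegral_congr_fun measurableSet_Ioo
    intro t ht
    dsimp only
    rw [hστ t (Set.Ioo_subset_Icc_self ht)]
  -- transfer of risk
  have hrisk_eq : ∀ (μ : Measure ℝ), IsProbabilityMeasure μ →
      ∀ d : (Fin n → ℝ) → ℝ → ℝ, riskSq μ τ d = riskSq μ σ d := by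
    intro μ hμ d
    haveI := hμ
    unfold riskSq
    apply lintegral_congr
    intro x
    apply lintegral_congr
    intro t
    rw [hστ (cdfOf μ t) ⟨cdfOf_nonneg μ t, cdfOf_le_one μ t⟩]
  -- risk formula
  have main : ∀ (μ : Measure ℝ), IsProbabilityMeasure μ → Continuous (cdfOf μ) →
      ∀ v : Fin (n+1) → ℝ, riskSq μ σ (invEst v)
        = ENNReal.ofReal (∑ i : Fin (n+1),
            (betaVar n σ i + (v i - betaMean n σ i)^2) / ((n:ℝ)+1)) := by
    intro μ hμ hc v
    haveI := hμ
    rw [riskSq_invEst μ hc σ hσc v]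
    congr 1
    exact Finset.sum_congr rfl (fun i _ => expand_term σ hσc i (v i))
  -- the best-invariant inequality, for all real weight vectors
  have hineq : ∀ (μ : Measure ℝ), IsProbabilityMeasure μ → Continuous (cdfOf μ) →
      ∀ v : Fin (n + 1) → ℝ,
        riskSq μ τ (invEst (betaMean n τ)) ≤ riskSq μ τ (invEst v) := by
    intro μ hμ hc v
    haveI := hμ
    rw [hrisk_eq μ hμ, hrisk_eq μ hμ, hmean, main μ hμ hc, main μ hμ hc v]
    apply ENNReal.ofReal_le_ofReal
    apply Finset.sum_le_sum
    intro i _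
    have hpos : (0:ℝ) < (n:ℝ) + 1 := by positivity
    have h2 : betaVar n σ i + (betaMean n σ i - betaMean n σ i)^2
        ≤ betaVar n σ i + (v i - betaMean n σ i)^2 := by
      simp only [sub_self]
      nlinarith [sq_nonneg (v i - betaMean n σ i)]
    exact div_le_div_of_nonneg_right h2 hpos.le |>.trans_eq rfl
  refine ⟨⟨?_, ?_, ?_⟩, ?_, ?_⟩
  · -- τ 0 < betaMean n τ 0
    rw [hmean, ← hστ 0 ⟨le_rfl, zero_le_one⟩]
    apply betaMean_gt_zero σ hσc
    intro t ht
    rw [hστ 0 ⟨le_rfl, zero_le_one⟩, hστ t (Set.Ioo_subset_Icc_self ht)]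
    exact hτm ⟨le_rfl, zero_le_one⟩ ⟨ht.1.le, ht.2.le⟩ ht.1
  · -- monotone
    rw [hmean]
    intro a b hab
    have := betaMean_mono_aux σ hσc hσm b.val b.isLt a.val a.isLt hab
    simpa using this
  · -- betaMean last < τ 1
    rw [hmean, ← hστ 1 ⟨zero_le_one, le_rfl⟩]
    apply betaMean_lt_one σ hσc
    intro t ht
    rw [hστ 1 ⟨zero_le_one, le_rfl⟩, hστ t (Set.Ioo_subset_Icc_self ht)]
    exact hτm ⟨ht.1.le, ht.2.le⟩ ⟨zero_le_one, le_rfl⟩ ht.2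
  · -- clause 2
    intro μ hμ hc
    haveI := hμ
    refine ⟨hineq μ hμ hc, ?_⟩
    rw [hrisk_eq μ hμ, hmean, main μ hμ hc]
    congr 1
    rw [hvar]
    have : ∀ i : Fin (n+1),
        (betaVar n σ i + (betaMean n σ i - betaMean n σ i)^2) / ((n:ℝ)+1)
          = betaVar n σ i / ((n:ℝ)+1) := by
      intro i
      simp only [sub_self]
      norm_num
    rw [Finset.sum_congr rfl (fun i _ => this i), ← Finset.sum_div]
    ring
  · -- clause 3
    intro ustar hstar μ hμ hc u hu
    haveI := hμ
    have h1 : (fun x t => τ (invEst ustar x t)) = invEst (betaMean n τ) := by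
      funext x t
      exact (hstar (countLE x t)).2
    have h2 : (fun x t => τ (invEst u x t)) = invEst (fun i => τ (u i)) := rfl
    rw [h1, h2]
    exact hineq μ hμ hc (fun i => τ (u i))

end
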